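/- Let T₁,…,T_k be a maximal k-packing of forests of a graph G, with k ≥ λ(G), where λ(G) is the (unweighted) minimum cut value. Then the subgraph H = (V, ∪ᵢ Tᵢ) satisfies λ(H) = λ(G); moreover, every minimum cut C of G satisfies C ⊆ ∪ᵢ Tᵢ. -/

import Mathlib

/-- The set of edges of `G` crossing the cut determined by `S`. -/
def crossingEdges {V : Type*} (G : SimpleGraph V) (S : Set V) : Set (Sym2 V) :=
  {e | e ∈ G.edgeSet ∧ ∃ x ∈ S, ∃ y ∉ S, e = s(x, y)}

/-- The number of edges of `G` crossing the cut determined by `S`. -/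
noncomputable def cutCount {V : Type*} (G : SimpleGraph V) (S : Set V) : ℕ :=
  (crossingEdges G S).ncard

lemma crossing_mono {V : Type*} {G G' : SimpleGraph V} (h : G ≤ G') (S : Set V) :
    crossingEdges G S ⊆ crossingEdges G' S := fun e ⟨he, hx⟩ =>
  ⟨SimpleGraph.edgeSet_mono h he, hx⟩

lemma key {V : Type*} [Fintype V] {k : ℕ} (G : SimpleGraph V) (T : Fin k → SimpleGraph V)
    (hforest : ∀ i, (T i).IsAcyclic)
    (hdisj : ∀ i j, i ≠ j → Disjoint (T i).edgeSet (T j).edgeSet)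
    (hmaximal : ∀ i, ∀ e ∈ G.edgeSet, e ∉ (⋃ j, (T j).edgeSet) →
      ¬ (SimpleGraph.fromEdgeSet ((T i).edgeSet ∪ {e})).IsAcyclic)
    (S : Set V) (x y : V) (hx : x ∈ S) (hy : y ∉ S)
    (he : s(x, y) ∈ G.edgeSet) (heH : s(x, y) ∉ ⋃ j, (T j).edgeSet)
    (A : Set (Sym2 V)) (hA : ∀ i, crossingEdges (T i) S ⊆ A)
    (hcard : A.ncard < k) : False := by
  -- some forest has no crossing edge
  classical
  have hpigeon : ∃ i, crossingEdges (T i) S = ∅ := by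
    by_contra h
    push_neg at h
    choose f hf using h
    have hinj : Function.Injective f := by
      intro i j hij
      by_contra hne'
      exact Set.disjoint_left.1 (hdisj i j hne') (hf i).1 (hij ▸ (hf j).1)
    have hsub : ↑(Finset.univ.image f) ⊆ A := by
      intro e heA
      simp only [Finset.coe_image, Set.mem_image, Finset.mem_coe, Finset.coe_univ,
        Set.image_univ, Set.mem_range] at heA
      obtain ⟨i, rfl⟩ := heA
      exact hA i (hf i)
    have : k ≤ A.ncard := by
      calc k = (Finset.univ.image f).card := by
              rw [Finset.card_image_of_injective _ hinj, Finset.card_univ, Fintype.card_fin]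
        _ = (↑(Finset.univ.image f) : Set (Sym2 V)).ncard := (Set.ncard_coe_finset _).symm
        _ ≤ A.ncard := Set.ncard_le_ncard hsub (Set.toFinite A)
    omega
  obtain ⟨i, hi⟩ := hpigeon
  -- the forest T i has no edge crossing S
  have hnocross : ∀ a b, (T i).Adj a b → a ∈ S → b ∉ S → False := by
    intro a b hab ha hb
    have : s(a, b) ∈ crossingEdges (T i) S := ⟨hab, a, ha, b, hb, rfl⟩
    rw [hi] at this
    exact this
  have hxy : x ≠ y := ((SimpleGraph.mem_edgeSet G).1 he).ne
  set T' := SimpleGraph.fromEdgeSet ((T i).edgeSet ∪ {s(x, y)}) with hT'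
  -- adjacency in T'
  have hT'adj : ∀ a b, T'.Adj a b → (T i).Adj a b ∨ s(a, b) = s(x, y) := by
    intro a b hab
    rw [hT', SimpleGraph.fromEdgeSet_adj] at hab
    rcases hab.1 with h | h
    · exact Or.inl ((SimpleGraph.mem_edgeSet _).1 h)
    · exact Or.inr h
  -- x,y not reachable in T i
  have hreach : ¬ (T i).Reachable x y := by
    rintro ⟨p⟩
    obtain ⟨d, _, hd1, hd2⟩ := p.exists_boundary_dart S hx hy
    exact hnocross d.fst d.snd d.adj hd1 hd2
  -- s(x,y) is a bridge of T'
  have hbridge : T'.IsBridge s(x, y) := by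
    rw [SimpleGraph.isBridge_iff]
    · intro hr
      apply hreach
      refine hr.mono ?_
      intro a b hab
      rcases hT'adj a b hab.1 with h | h
      · exact h
      · exfalso
        exact hab.2 (by rw [SimpleGraph.fromEdgeSet_adj]; exact ⟨h, hab.1.ne⟩)
  -- T' is acyclic
  have hacyc : T'.IsAcyclic := by
    intro v c hc
    have hnotmem : s(x, y) ∉ c.edges :=
      hbridge.notMem_edges_of_isCycle hc
    have hedges : ∀ e ∈ c.edges, e ∈ (T i).edgeSet := by
      intro e hec
      have := c.edges_subset_edgeSet hec
      rw [hT', SimpleGraph.edgeSet_fromEdgeSet] at this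
      rcases this.1 with h | h
      · exact h
      · exact absurd (h ▸ hec) hnotmem
    exact hforest i (c.transfer (T i) hedges) (hc.transfer hedges)
  exact hmaximal i s(x, y) he heH hacyc

/-- Let `T₁,…,T_k` be a maximal `k`-packing of forests of a finite
connected simple graph `G` (pairwise edge-disjoint acyclic subgraphs such that adding
any unused edge of `G` to any `Tᵢ` creates a cycle), and suppose `k ≥ λ(G)`, witnessed
by a minimum cut `S₀` with `cutCount G S₀ ≤ k`. Then the subgraph `H = ⨆ i, Tᵢ`
satisfies `λ(H) = λ(G)`: every cut of `H` has at least `λ(G)` edges and the cut at `S₀`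
has exactly `λ(G)` edges in `H`; moreover every minimum cut of `G` has all its edges
in `H`. -/
theorem stmt17 {V : Type*} [Fintype V] (G : SimpleGraph V) (hG : G.Connected)
    (k : ℕ) (T : Fin k → SimpleGraph V)
    (hle : ∀ i, T i ≤ G)
    (hforest : ∀ i, (T i).IsAcyclic)
    (hdisj : ∀ i j, i ≠ j → Disjoint (T i).edgeSet (T j).edgeSet)
    (hmaximal : ∀ i, ∀ e ∈ G.edgeSet, e ∉ (⋃ j, (T j).edgeSet) →
      ¬ (SimpleGraph.fromEdgeSet ((T i).edgeSet ∪ {e})).IsAcyclic)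
    (S₀ : Set V) (hS₀ne : S₀.Nonempty) (hS₀pr : S₀ ≠ Set.univ)
    (hS₀min : ∀ S : Set V, S.Nonempty → S ≠ Set.univ → cutCount G S₀ ≤ cutCount G S)
    (hk : cutCount G S₀ ≤ k) :
    (∀ S : Set V, S.Nonempty → S ≠ Set.univ →
        cutCount G S₀ ≤ cutCount (⨆ i, T i) S) ∧
      cutCount (⨆ i, T i) S₀ = cutCount G S₀ ∧
      (∀ S : Set V, S.Nonempty → S ≠ Set.univ →
        (∀ S' : Set V, S'.Nonempty → S' ≠ Set.univ → cutCount G S ≤ cutCount G S') →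
        crossingEdges G S ⊆ (⨆ i, T i).edgeSet) := by
  have hHG : (⨆ i, T i) ≤ G := iSup_le hle
  have hHedge : (⨆ i, T i).edgeSet = ⋃ j, (T j).edgeSet := by
    ext e
    refine Sym2.ind (fun a b => ?_) e
    simp [SimpleGraph.mem_edgeSet, SimpleGraph.iSup_adj, Set.mem_iUnion]
  have subset_H : ∀ S : Set V, cutCount G S ≤ k →
      crossingEdges G S ⊆ (⨆ i, T i).edgeSet := by
    intro S hSk e he
    by_contra heH
    rw [hHedge] at heH
    obtain ⟨heG, x, hx, y, hy, rfl⟩ := he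
    have hmem : s(x, y) ∈ crossingEdges G S := ⟨heG, x, hx, y, hy, rfl⟩
    refine key G T hforest hdisj hmaximal S x y hx hy heG heH
      (crossingEdges G S \ {s(x, y)}) ?_ ?_
    · intro i e' he'
      refine ⟨crossing_mono (hle i) S he', ?_⟩
      intro h
      rw [Set.mem_singleton_iff] at h
      subst h
      exact heH (Set.mem_iUnion.2 ⟨i, he'.1⟩)
    · have hss : crossingEdges G S \ {s(x, y)} ⊂ crossingEdges G S :=
        (Set.ssubset_iff_of_subset Set.diff_subset).2
          ⟨s(x, y), hmem, fun h => h.2 rfl⟩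
      have := Set.ncard_lt_ncard hss (Set.toFinite _)
      unfold cutCount at hSk
      omega
  refine ⟨?_, ?_, ?_⟩
  · intro S hne hpr
    by_cases hall : crossingEdges G S ⊆ (⨆ i, T i).edgeSet
    · have heq : crossingEdges (⨆ i, T i) S = crossingEdges G S :=
        Set.Subset.antisymm (crossing_mono hHG S) (fun e he => ⟨hall he, he.2⟩)
      unfold cutCount
      rw [heq]
      exact hS₀min S hne hpr
    · rw [Set.not_subset] at hall
      obtain ⟨e, heG, heH⟩ := hall
      by_contra hlt
      push_neg at hlt
      obtain ⟨heGe, x, hx, y, hy, rfl⟩ := heG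
      exact key G T hforest hdisj hmaximal S x y hx hy heGe
        (by rw [← hHedge]; exact heH)
        (crossingEdges (⨆ i, T i) S) (fun i => crossing_mono (le_iSup T i) S)
        (lt_of_lt_of_le hlt hk)
  · have heq : crossingEdges (⨆ i, T i) S₀ = crossingEdges G S₀ :=
      Set.Subset.antisymm (crossing_mono hHG S₀)
        (fun e he => ⟨subset_H S₀ hk he, he.2⟩)
    unfold cutCount
    rw [heq]
  · intro S hne hpr hmin
    exact subset_H S (le_trans (hmin S₀ hS₀ne hS₀pr) hk)
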